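/- For every n ≥ 1 and every r > 0 there exist ε₀ > 0 and C > 0 with the following property: for every Z ∈ ℝ^{n×n} with |Z| ≤ r, every ε ∈ (0, ε₀], and every i ∈ {1, …, n}, one has |σ_i(exp(εZ)) − 1 − ε λ_i(Z_sym)| ≤ C ε². -/

import Mathlib

open MeasureTheory Filter Matrix

noncomputable def frobSq {n : ℕ} (X : Matrix (Fin n) (Fin n) ℝ) : ℝ := ∑ i, ∑ j, (X i j)^2
noncomputable def frob {n : ℕ} (X : Matrix (Fin n) (Fin n) ℝ) : ℝ := Real.sqrt (frobSq X)
noncomputable def msym {n : ℕ} (X : Matrix (Fin n) (Fin n) ℝ) : Matrix (Fin n) (Fin n) ℝ :=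
  (1/2 : ℝ) • (X + Xᵀ)
noncomputable def mdev {n : ℕ} (X : Matrix (Fin n) (Fin n) ℝ) : Matrix (Fin n) (Fin n) ℝ :=
  X - (X.trace / n) • (1 : Matrix (Fin n) (Fin n) ℝ)
noncomputable def mils {n : ℕ} (X : Matrix (Fin n) (Fin n) ℝ) : Matrix (Fin n) (Fin n) ℝ :=
  msym X - (X.trace / n) • (1 : Matrix (Fin n) (Fin n) ℝ)

/-- Matrix exponential, defined by its power series. -/
noncomputable def mexp {n : ℕ} (A : Matrix (Fin n) (Fin n) ℝ) : Matrix (Fin n) (Fin n) ℝ :=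
  ∑' k : ℕ, ((k.factorial : ℝ)⁻¹) • A ^ k

/-- The eigenvalues of a symmetric real matrix, listed in ascending order
(and junk value `0` if the matrix is not symmetric). -/
noncomputable def sortedEig {n : ℕ} (A : Matrix (Fin n) (Fin n) ℝ) : Fin n → ℝ :=
  if hA : A.IsHermitian then fun i => hA.eigenvalues (Tuple.sort hA.eigenvalues i) else 0

/-- The singular values of a real square matrix in ascending order. -/
noncomputable def singVals {n : ℕ} (X : Matrix (Fin n) (Fin n) ℝ) : Fin n → ℝ :=
  fun i => Real.sqrt (sortedEig (Xᵀ * X) i)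

/-- The Jacobian matrix of a map `ℝ^n → ℝ^n`. -/
noncomputable def jac {n : ℕ} (u : EuclideanSpace ℝ (Fin n) → EuclideanSpace ℝ (Fin n))
    (x : EuclideanSpace ℝ (Fin n)) : Matrix (Fin n) (Fin n) ℝ :=
  fun i j => fderiv ℝ u x (EuclideanSpace.single j 1) i

open scoped RealInnerProductSpace

namespace Aux
variable {n : ℕ}

def toE {n : ℕ} (X : Matrix (Fin n) (Fin n) ℝ) : EuclideanSpace ℝ (Fin n × Fin n) :=
  WithLp.toLp 2 (fun p => X p.1 p.2)

lemma frob_eq_norm (X : Matrix (Fin n) (Fin n) ℝ) : frob X = ‖toE X‖ := by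
  rw [EuclideanSpace.norm_eq, frob, frobSq]
  congr 1
  rw [Fintype.sum_prod_type]
  simp [toE, sq_abs]

lemma frobSq_nonneg (X : Matrix (Fin n) (Fin n) ℝ) : 0 ≤ frobSq X :=
  Finset.sum_nonneg fun _ _ => Finset.sum_nonneg fun _ _ => sq_nonneg _

lemma frob_nonneg (X : Matrix (Fin n) (Fin n) ℝ) : 0 ≤ frob X := Real.sqrt_nonneg _

lemma sq_frob (X : Matrix (Fin n) (Fin n) ℝ) : frob X ^ 2 = frobSq X :=
  Real.sq_sqrt (frobSq_nonneg X)

lemma frob_add (X Y : Matrix (Fin n) (Fin n) ℝ) : frob (X + Y) ≤ frob X + frob Y := by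
  simp only [frob_eq_norm]
  have : toE (X + Y) = toE X + toE Y := rfl
  rw [this]; exact norm_add_le _ _

lemma frob_smul (c : ℝ) (X : Matrix (Fin n) (Fin n) ℝ) : frob (c • X) = |c| * frob X := by
  simp only [frob_eq_norm]
  have : toE (c • X) = c • toE X := rfl
  rw [this, norm_smul, Real.norm_eq_abs]

lemma frob_neg (X : Matrix (Fin n) (Fin n) ℝ) : frob (-X) = frob X := by
  simp only [frob_eq_norm]
  have : toE (-X) = -(toE X) := rfl
  rw [this, norm_neg]

lemma frob_transpose (X : Matrix (Fin n) (Fin n) ℝ) : frob Xᵀ = frob X := by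
  unfold frob frobSq
  rw [Finset.sum_comm]
  rfl

lemma abs_entry_le_frob (X : Matrix (Fin n) (Fin n) ℝ) (i j : Fin n) : |X i j| ≤ frob X := by
  rw [frob]
  rw [show |X i j| = Real.sqrt ((X i j)^2) by rw [Real.sqrt_sq_eq_abs]]
  apply Real.sqrt_le_sqrt
  calc (X i j)^2 ≤ ∑ j', (X i j')^2 :=
        Finset.single_le_sum (f := fun j' => (X i j')^2) (fun _ _ => sq_nonneg _) (Finset.mem_univ j)
    _ ≤ frobSq X :=
        Finset.single_le_sum (f := fun i' => ∑ j', (X i' j')^2)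
          (fun _ _ => Finset.sum_nonneg fun _ _ => sq_nonneg _) (Finset.mem_univ i)

lemma frob_le_of_entries (X : Matrix (Fin n) (Fin n) ℝ) {b : ℝ} (hb : 0 ≤ b)
    (h : ∀ i j, |X i j| ≤ b) : frob X ≤ n * b := by
  rw [frob]
  have : frobSq X ≤ (n * b)^2 := by
    calc frobSq X ≤ ∑ _i : Fin n, ∑ _j : Fin n, b^2 := by
          apply Finset.sum_le_sum; intro i _; apply Finset.sum_le_sum; intro j _
          calc (X i j)^2 = |X i j|^2 := (sq_abs _).symm
            _ ≤ b^2 := by apply pow_le_pow_left₀ (abs_nonneg _) (h i j)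
      _ = n^2 * b^2 := by simp [Finset.sum_const]; ring
      _ = (n * b)^2 := by ring
  calc Real.sqrt (frobSq X) ≤ Real.sqrt ((n*b)^2) := Real.sqrt_le_sqrt this
    _ = n * b := Real.sqrt_sq (by positivity)

lemma frobSq_mul (X Y : Matrix (Fin n) (Fin n) ℝ) : frobSq (X * Y) ≤ frobSq X * frobSq Y := by
  unfold frobSq
  calc ∑ i, ∑ j, ((X * Y) i j)^2
      ≤ ∑ i, ∑ j, (∑ k, (X i k)^2) * (∑ k, (Y k j)^2) := by
        apply Finset.sum_le_sum; intro i _; apply Finset.sum_le_sum; intro j _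
        rw [Matrix.mul_apply]
        exact Finset.sum_mul_sq_le_sq_mul_sq _ _ _
    _ = (∑ i, ∑ k, (X i k)^2) * (∑ k, ∑ j, (Y k j)^2) := by
        rw [Finset.sum_mul]
        apply Finset.sum_congr rfl; intro i _
        rw [← Finset.mul_sum, Finset.sum_comm]
    _ = frobSq X * frobSq Y := rfl

lemma frob_mul (X Y : Matrix (Fin n) (Fin n) ℝ) : frob (X * Y) ≤ frob X * frob Y := by
  unfold frob
  rw [← Real.sqrt_mul (frobSq_nonneg X)]
  exact Real.sqrt_le_sqrt (frobSq_mul X Y)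

lemma frob_pow (X : Matrix (Fin n) (Fin n) ℝ) : ∀ k : ℕ, 1 ≤ k → frob (X ^ k) ≤ frob X ^ k := by
  intro k
  induction k with
  | zero => intro h; omega
  | succ m ih =>
    intro _
    rcases Nat.eq_or_lt_of_le (Nat.one_le_iff_ne_zero.mpr (Nat.succ_ne_zero m)) with h | h
    · rcases Nat.eq_zero_or_pos m with hm | hm
      · subst hm; simp
      · have h1 : 1 ≤ m := hm
        rw [pow_succ, pow_succ]
        calc frob (X ^ m * X) ≤ frob (X ^ m) * frob X := frob_mul _ _
          _ ≤ frob X ^ m * frob X :=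
            mul_le_mul_of_nonneg_right (ih h1) (frob_nonneg X)
    · rcases Nat.eq_zero_or_pos m with hm | hm
      · subst hm; simp
      · have h1 : 1 ≤ m := hm
        rw [pow_succ, pow_succ]
        calc frob (X ^ m * X) ≤ frob (X ^ m) * frob X := frob_mul _ _
          _ ≤ frob X ^ m * frob X :=
            mul_le_mul_of_nonneg_right (ih h1) (frob_nonneg X)


lemma entry_pow_le (A : Matrix (Fin n) (Fin n) ℝ) {c : ℝ} (hc : frob A ≤ c) (hc1 : 1 ≤ c)
    (k : ℕ) (i j : Fin n) : |(A ^ k) i j| ≤ c ^ k := by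
  rcases Nat.eq_zero_or_pos k with hk | hk
  · subst hk
    simp only [pow_zero]
    by_cases hij : i = j
    · subst hij; simpa [Matrix.one_apply] using (by linarith : |(1:ℝ)| ≤ 1)
    · simpa [Matrix.one_apply, hij] using (by linarith : (0:ℝ) ≤ 1)
  · calc |(A ^ k) i j| ≤ frob (A ^ k) := abs_entry_le_frob _ i j
      _ ≤ frob A ^ k := frob_pow A k hk
      _ ≤ c ^ k := pow_le_pow_left₀ (frob_nonneg A) hc k

lemma summable_entry (A : Matrix (Fin n) (Fin n) ℝ) (i j : Fin n) :
    Summable (fun k : ℕ => ((k.factorial : ℝ)⁻¹) * (A ^ k) i j) := by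
  set c := max 1 (frob A) with hc
  have hb : ∀ k : ℕ, ‖((k.factorial : ℝ)⁻¹) * (A ^ k) i j‖ ≤ c ^ k / (k.factorial : ℝ) := by
    intro k
    rw [Real.norm_eq_abs, abs_mul, abs_inv,
      abs_of_nonneg (by positivity : (0:ℝ) ≤ (k.factorial:ℝ)), div_eq_inv_mul]
    apply mul_le_mul_of_nonneg_left _ (by positivity)
    exact entry_pow_le A (le_max_right _ _) (le_max_left _ _) k i j
  exact Summable.of_norm_bounded (Real.summable_pow_div_factorial c) hb

lemma summable_mexp (A : Matrix (Fin n) (Fin n) ℝ) :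
    Summable (fun k : ℕ => ((k.factorial : ℝ)⁻¹) • A ^ k) := by
  rw [show (fun k : ℕ => ((k.factorial : ℝ)⁻¹) • A ^ k) =
      (fun k : ℕ => (fun i j => ((k.factorial : ℝ)⁻¹) * (A ^ k) i j :
        Matrix (Fin n) (Fin n) ℝ)) from rfl]
  exact Pi.summable.mpr fun i => Pi.summable.mpr fun j => summable_entry A i j

lemma mexp_apply (A : Matrix (Fin n) (Fin n) ℝ) (i j : Fin n) :
    mexp A i j = ∑' k : ℕ, ((k.factorial : ℝ)⁻¹) * (A ^ k) i j := by
  rw [mexp]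
  erw [tsum_apply (summable_mexp A), tsum_apply (Pi.summable.mp (summable_mexp A) i)]
  rfl

lemma mexp_tail_entry (A : Matrix (Fin n) (Fin n) ℝ) {c : ℝ} (hc : frob A ≤ c) (hc0 : 0 ≤ c)
    (i j : Fin n) : |(mexp A - 1 - A) i j| ≤ c ^ 2 * Real.exp c := by
  set c' := max 1 c with hc'
  have hcc' : frob A ≤ c' := le_trans hc (le_max_right _ _)
  have h1c' : (1:ℝ) ≤ c' := le_max_left _ _
  set a : ℕ → ℝ := fun k => ((k.factorial : ℝ)⁻¹) * (A ^ k) i j with ha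
  have hs : Summable a := summable_entry A i j
  have hs1 : Summable (fun k => a (k + 1)) := (summable_nat_add_iff 1).mpr hs
  have hs2 : Summable (fun k => a (k + 2)) := (summable_nat_add_iff 2).mpr hs
  have key : (mexp A - 1 - A) i j = ∑' k : ℕ, a (k + 2) := by
    have h0 : mexp A i j = ∑' k, a k := mexp_apply A i j
    rw [Summable.tsum_eq_zero_add hs, Summable.tsum_eq_zero_add hs1] at h0
    have e0 : a 0 = (1 : Matrix (Fin n) (Fin n) ℝ) i j := by simp [ha]
    have e1 : a (0 + 1) = A i j := by simp [ha]
    simp only [Matrix.sub_apply]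
    rw [h0, e0, e1]
    have : ∀ b : ℕ, b + 1 + 1 = b + 2 := fun b => rfl
    simp only [this]
    ring
  rw [key]
  have habs : ∀ k : ℕ, |a (k + 2)| ≤ c^2 * (c ^ k / k.factorial) := by
    intro k
    have h1 : |(A ^ (k+2)) i j| ≤ c ^ (k+2) :=
      calc |(A ^ (k+2)) i j| ≤ frob (A^(k+2)) := abs_entry_le_frob _ _ _
        _ ≤ frob A ^ (k+2) := frob_pow A _ (by omega)
        _ ≤ c ^ (k+2) := pow_le_pow_left₀ (frob_nonneg A) hc _
    have h2 : ((k.factorial:ℝ)) ≤ (((k+2).factorial : ℕ) : ℝ) := by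
      exact_mod_cast Nat.factorial_le (by omega)
    have e : a (k+2) = (((k+2).factorial : ℕ):ℝ)⁻¹ * (A ^ (k+2)) i j := rfl
    rw [e, abs_mul, abs_inv, abs_of_nonneg (by positivity : (0:ℝ) ≤ (((k+2).factorial : ℕ):ℝ))]
    calc ((((k+2).factorial : ℕ)):ℝ)⁻¹ * |(A ^ (k+2)) i j| ≤ ((k.factorial:ℕ):ℝ)⁻¹ * c^(k+2) := by
          apply mul_le_mul _ h1 (abs_nonneg _) (by positivity)
          exact inv_anti₀ (by positivity) h2
      _ = c^2 * (c^k / k.factorial) := by rw [pow_add]; ring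
  have hsum2 : Summable (fun k:ℕ => c^2 * (c^k / (k.factorial:ℝ))) :=
    (Real.summable_pow_div_factorial c).mul_left _
  calc |∑' k, a (k+2)| ≤ ∑' k, |a (k+2)| := by
        simpa [Real.norm_eq_abs] using norm_tsum_le_tsum_norm (f := fun k => a (k+2))
          (by simpa [Real.norm_eq_abs] using hs2.abs)
    _ ≤ ∑' k : ℕ, c^2 * (c^k / (k.factorial:ℝ)) := Summable.tsum_le_tsum habs hs2.abs hsum2
    _ = c^2 * ∑' k : ℕ, c^k / (k.factorial:ℝ) := tsum_mul_left
    _ = c^2 * Real.exp c := by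
        rw [Real.exp_eq_exp_ℝ, NormedSpace.exp_eq_tsum_div]

lemma mexp_tail (A : Matrix (Fin n) (Fin n) ℝ) {c : ℝ} (hc : frob A ≤ c) (hc0 : 0 ≤ c) :
    frob (mexp A - 1 - A) ≤ n * (c ^ 2 * Real.exp c) :=
  frob_le_of_entries _ (by positivity) (mexp_tail_entry A hc hc0)

noncomputable def ray (A : Matrix (Fin n) (Fin n) ℝ) (x : EuclideanSpace ℝ (Fin n)) : ℝ :=
  ⟪x, Matrix.toEuclideanLin A x⟫

lemma ray_add (A B : Matrix (Fin n) (Fin n) ℝ) (x : EuclideanSpace ℝ (Fin n)) :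
    ray (A + B) x = ray A x + ray B x := by
  unfold ray
  rw [map_add, LinearMap.add_apply, inner_add_right]

lemma ray_smul (c : ℝ) (A : Matrix (Fin n) (Fin n) ℝ) (x : EuclideanSpace ℝ (Fin n)) :
    ray (c • A) x = c * ray A x := by
  unfold ray
  rw [_root_.map_smul, LinearMap.smul_apply, real_inner_smul_right]

lemma ray_one (x : EuclideanSpace ℝ (Fin n)) (hx : ‖x‖ = 1) : ray 1 x = 1 := by
  unfold ray
  have h : Matrix.toEuclideanLin (1 : Matrix (Fin n) (Fin n) ℝ) x = x := by
    rw [Matrix.toEuclideanLin_apply, Matrix.one_mulVec]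
  rw [h, real_inner_self_eq_norm_sq, hx]
  norm_num

lemma ray_transpose_mul_self (P : Matrix (Fin n) (Fin n) ℝ) (x : EuclideanSpace ℝ (Fin n)) :
    0 ≤ ray (Pᵀ * P) x := by
  unfold ray
  have h1 : (Pᵀ : Matrix (Fin n) (Fin n) ℝ) = Pᴴ := by
    ext i j; simp [Matrix.conjTranspose_apply]
  have h2 : Matrix.toEuclideanLin (Pᵀ * P) x
      = Matrix.toEuclideanLin Pᵀ (Matrix.toEuclideanLin P x) := by
    simp only [Matrix.toEuclideanLin_apply]
    rw [← Matrix.mulVec_mulVec]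
  rw [h2, h1, Matrix.toEuclideanLin_conjTranspose_eq_adjoint,
    LinearMap.adjoint_inner_right]
  exact real_inner_self_nonneg

namespace Spec
variable {A : Matrix (Fin n) (Fin n) ℝ} (hA : A.IsHermitian)

lemma eigen_apply (j : Fin n) :
    Matrix.toEuclideanLin A (hA.eigenvectorBasis j) = hA.eigenvalues j • hA.eigenvectorBasis j := by
  apply (WithLp.equiv 2 (Fin n → ℝ)).injective
  rw [WithLp.equiv_apply, WithLp.equiv_apply, Matrix.ofLp_toEuclideanLin_apply]
  have h := hA.mulVec_eigenvectorBasis j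
  exact h

lemma ray_coords (x : EuclideanSpace ℝ (Fin n)) :
    ray A x = ∑ j, hA.eigenvalues j * (hA.eigenvectorBasis.repr x j)^2 := by
  have hS := (Matrix.isHermitian_iff_isSymmetric.mp hA)
  unfold ray
  rw [← OrthonormalBasis.sum_inner_mul_inner hA.eigenvectorBasis x (Matrix.toEuclideanLin A x)]
  apply Finset.sum_congr rfl
  intro j _
  have h1 : ⟪hA.eigenvectorBasis j, Matrix.toEuclideanLin A x⟫
      = hA.eigenvalues j * ⟪hA.eigenvectorBasis j, x⟫ := by
    rw [← hS (hA.eigenvectorBasis j) x, eigen_apply hA j, real_inner_smul_left]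
  rw [h1, real_inner_comm (hA.eigenvectorBasis j) x, ← OrthonormalBasis.repr_apply_apply]
  ring

lemma norm_coords (x : EuclideanSpace ℝ (Fin n)) :
    ‖x‖^2 = ∑ j, (hA.eigenvectorBasis.repr x j)^2 := by
  rw [← real_inner_self_eq_norm_sq]
  rw [← OrthonormalBasis.sum_inner_mul_inner hA.eigenvectorBasis x x]
  apply Finset.sum_congr rfl
  intro j _
  rw [real_inner_comm (hA.eigenvectorBasis j) x, ← OrthonormalBasis.repr_apply_apply]
  ring

lemma repr_eq_zero_of_mem_span (s : Finset (Fin n)) {x : EuclideanSpace ℝ (Fin n)}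
    (hx : x ∈ Submodule.span ℝ (hA.eigenvectorBasis '' ↑s)) {j : Fin n} (hj : j ∉ s) :
    hA.eigenvectorBasis.repr x j = 0 := by
  rw [OrthonormalBasis.repr_apply_apply]
  induction hx using Submodule.span_induction with
  | mem y hy =>
    obtain ⟨k, hk, rfl⟩ := hy
    have := hA.eigenvectorBasis.orthonormal.2 (i := j) (j := k) (by rintro rfl; exact hj hk)
    exact this
  | zero => simp
  | add y z _ _ hy hz => rw [inner_add_right, hy, hz, add_zero]
  | smul c y _ hy => rw [real_inner_smul_right, hy, mul_zero]

lemma ray_ge_of_supported {s : Finset (Fin n)} {m : ℝ} (hm : ∀ j ∈ s, m ≤ hA.eigenvalues j)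
    {x : EuclideanSpace ℝ (Fin n)} (hx1 : ‖x‖ = 1) (hx0 : ∀ j ∉ s, hA.eigenvectorBasis.repr x j = 0) :
    m ≤ ray A x := by
  have hn : (1:ℝ) = ∑ j, (hA.eigenvectorBasis.repr x j)^2 := by
    rw [← norm_coords hA x, hx1]; norm_num
  rw [ray_coords hA x]
  calc m = m * 1 := by ring
    _ = ∑ j, m * (hA.eigenvectorBasis.repr x j)^2 := by rw [hn, Finset.mul_sum]
    _ ≤ ∑ j, hA.eigenvalues j * (hA.eigenvectorBasis.repr x j)^2 := by
        apply Finset.sum_le_sum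
        intro j _
        by_cases hj : j ∈ s
        · exact mul_le_mul_of_nonneg_right (hm j hj) (sq_nonneg _)
        · rw [hx0 j hj]; ring_nf; exact le_refl _

lemma ray_le_of_supported {s : Finset (Fin n)} {m : ℝ} (hm : ∀ j ∈ s, hA.eigenvalues j ≤ m)
    {x : EuclideanSpace ℝ (Fin n)} (hx1 : ‖x‖ = 1) (hx0 : ∀ j ∉ s, hA.eigenvectorBasis.repr x j = 0) :
    ray A x ≤ m := by
  have hn : (1:ℝ) = ∑ j, (hA.eigenvectorBasis.repr x j)^2 := by
    rw [← norm_coords hA x, hx1]; norm_num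
  rw [ray_coords hA x]
  calc ∑ j, hA.eigenvalues j * (hA.eigenvectorBasis.repr x j)^2
      ≤ ∑ j, m * (hA.eigenvectorBasis.repr x j)^2 := by
        apply Finset.sum_le_sum
        intro j _
        by_cases hj : j ∈ s
        · exact mul_le_mul_of_nonneg_right (hm j hj) (sq_nonneg _)
        · rw [hx0 j hj]; ring_nf; exact le_refl _
    _ = m * 1 := by rw [hn, Finset.mul_sum]
    _ = m := by ring

end Spec

lemma exists_unit_mem_spans (v w : Fin n → EuclideanSpace ℝ (Fin n))
    (hv : Orthonormal ℝ v) (hw : Orthonormal ℝ w) (s t : Finset (Fin n))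
    (hcard : n < s.card + t.card) :
    ∃ x : EuclideanSpace ℝ (Fin n), ‖x‖ = 1 ∧ x ∈ Submodule.span ℝ (v '' ↑s)
      ∧ x ∈ Submodule.span ℝ (w '' ↑t) := by
  set V := Submodule.span ℝ (v '' ↑s) with hVdef
  set W := Submodule.span ℝ (w '' ↑t) with hWdef
  have hrange : ∀ (u : Fin n → EuclideanSpace ℝ (Fin n)) (s' : Finset (Fin n)),
      Set.range (fun j : {j // j ∈ s'} => u ↑j) = u '' ↑s' := by
    intro u s'
    rw [show (fun j : {j // j ∈ s'} => u ↑j) = u ∘ (Subtype.val : {j // j ∈ s'} → Fin n) from rfl,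
      Set.range_comp, Subtype.range_coe]
  have hV : Module.finrank ℝ V = s.card := by
    have h1 : LinearIndependent ℝ (fun j : {j // j ∈ s} => v ↑j) :=
      (hv.comp Subtype.val Subtype.val_injective).linearIndependent
    rw [hVdef, ← hrange v s, finrank_span_eq_card h1, Fintype.card_coe]
  have hW : Module.finrank ℝ W = t.card := by
    have h1 : LinearIndependent ℝ (fun j : {j // j ∈ t} => w ↑j) :=
      (hw.comp Subtype.val Subtype.val_injective).linearIndependent
    rw [hWdef, ← hrange w t, finrank_span_eq_card h1, Fintype.card_coe]
  have hsum := Submodule.finrank_sup_add_finrank_inf_eq V W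
  have hle : Module.finrank ℝ ↥(V ⊔ W) ≤ n := by
    calc Module.finrank ℝ ↥(V ⊔ W) ≤ Module.finrank ℝ (EuclideanSpace ℝ (Fin n)) :=
          Submodule.finrank_le _
      _ = n := finrank_euclideanSpace_fin
  have hpos : 0 < Module.finrank ℝ ↥(V ⊓ W) := by omega
  have hne : V ⊓ W ≠ ⊥ := by
    intro hbot
    rw [hbot, finrank_bot] at hpos
    omega
  obtain ⟨y, hyVW, hy0⟩ := Submodule.exists_mem_ne_zero_of_ne_bot hne
  refine ⟨(‖y‖⁻¹ : ℝ) • y, norm_smul_inv_norm hy0, ?_, ?_⟩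
  · exact Submodule.smul_mem V _ (hyVW.1)
  · exact Submodule.smul_mem W _ (hyVW.2)

lemma sorted_le {A B : Matrix (Fin n) (Fin n) ℝ} (hA : A.IsHermitian) (hB : B.IsHermitian)
    (a b : ℝ) (hb : 0 ≤ b)
    (h : ∀ x : EuclideanSpace ℝ (Fin n), ‖x‖ = 1 → ray A x ≤ a + b * ray B x) (i : Fin n) :
    sortedEig A i ≤ a + b * sortedEig B i := by
  have hsA : sortedEig A i = hA.eigenvalues (Tuple.sort hA.eigenvalues i) := by
    rw [sortedEig, dif_pos hA]
  have hsB : sortedEig B i = hB.eigenvalues (Tuple.sort hB.eigenvalues i) := by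
    rw [sortedEig, dif_pos hB]
  set σ := Tuple.sort hA.eigenvalues with hσ
  set τ := Tuple.sort hB.eigenvalues with hτ
  set s := Finset.image σ (Finset.Ici i) with hsdef
  set t := Finset.image τ (Finset.Iic i) with htdef
  have hs : s.card = n - i := by
    rw [hsdef, Finset.card_image_of_injective _ (Equiv.injective σ), Fin.card_Ici]
  have ht : t.card = i + 1 := by
    rw [htdef, Finset.card_image_of_injective _ (Equiv.injective τ), Fin.card_Iic]
  have hcard : n < s.card + t.card := by
    rw [hs, ht]
    have := i.isLt
    omega
  obtain ⟨x, hx1, hxV, hxW⟩ := exists_unit_mem_spans _ _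
    hA.eigenvectorBasis.orthonormal hB.eigenvectorBasis.orthonormal s t hcard
  have h1 : hA.eigenvalues (σ i) ≤ ray A x := by
    apply Spec.ray_ge_of_supported hA _ hx1
      (fun j hj => Spec.repr_eq_zero_of_mem_span hA s hxV hj)
    intro j hj
    rw [hsdef] at hj
    obtain ⟨k, hk, rfl⟩ := Finset.mem_image.mp hj
    exact Tuple.monotone_sort hA.eigenvalues (Finset.mem_Ici.mp hk)
  have h2 : ray B x ≤ hB.eigenvalues (τ i) := by
    apply Spec.ray_le_of_supported hB _ hx1
      (fun j hj => Spec.repr_eq_zero_of_mem_span hB t hxW hj)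
    intro j hj
    rw [htdef] at hj
    obtain ⟨k, hk, rfl⟩ := Finset.mem_image.mp hj
    exact Tuple.monotone_sort hB.eigenvalues (Finset.mem_Iic.mp hk)
  calc sortedEig A i = hA.eigenvalues (σ i) := hsA
    _ ≤ ray A x := h1
    _ ≤ a + b * ray B x := h x hx1
    _ ≤ a + b * hB.eigenvalues (τ i) := by nlinarith
    _ = a + b * sortedEig B i := by rw [hsB]
lemma norm_sq_eq_sum (y : EuclideanSpace ℝ (Fin n)) : ‖y‖^2 = ∑ i, (y i)^2 := by
  rw [EuclideanSpace.norm_eq, Real.sq_sqrt (Finset.sum_nonneg fun _ _ => sq_nonneg _)]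
  apply Finset.sum_congr rfl
  intro i _
  rw [Real.norm_eq_abs, sq_abs]

lemma frobSq_nonneg' (X : Matrix (Fin n) (Fin n) ℝ) : 0 ≤ frobSq X :=
  Finset.sum_nonneg fun _ _ => Finset.sum_nonneg fun _ _ => sq_nonneg _

lemma norm_mulvec_le (E : Matrix (Fin n) (Fin n) ℝ) (x : EuclideanSpace ℝ (Fin n)) :
    ‖Matrix.toEuclideanLin E x‖ ≤ frob E * ‖x‖ := by
  have hsq : ‖Matrix.toEuclideanLin E x‖^2 ≤ frobSq E * ‖x‖^2 := by
    rw [norm_sq_eq_sum, norm_sq_eq_sum]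
    have happ : ∀ i, (Matrix.toEuclideanLin E x) i = ∑ j, E i j * x j := by
      intro i
      rfl
    calc ∑ i, ((Matrix.toEuclideanLin E x) i)^2
        = ∑ i, (∑ j, E i j * x j)^2 := by
          apply Finset.sum_congr rfl; intro i _; rw [happ]
      _ ≤ ∑ i, (∑ j, (E i j)^2) * (∑ j, (x j)^2) := by
          apply Finset.sum_le_sum; intro i _
          exact Finset.sum_mul_sq_le_sq_mul_sq _ _ _
      _ = frobSq E * ∑ j, (x j)^2 := by rw [← Finset.sum_mul]; rfl
  have h1 : (0:ℝ) ≤ frob E * ‖x‖ := mul_nonneg (Real.sqrt_nonneg _) (norm_nonneg _)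
  have hfe : frob E ^ 2 = frobSq E := Real.sq_sqrt (frobSq_nonneg' E)
  nlinarith [norm_nonneg (Matrix.toEuclideanLin E x), hfe, norm_nonneg x]

lemma abs_ray_le_frob (E : Matrix (Fin n) (Fin n) ℝ) {x : EuclideanSpace ℝ (Fin n)}
    (hx : ‖x‖ = 1) : |ray E x| ≤ frob E := by
  unfold ray
  calc |⟪x, Matrix.toEuclideanLin E x⟫| ≤ ‖x‖ * ‖Matrix.toEuclideanLin E x‖ :=
        abs_real_inner_le_norm _ _
    _ ≤ ‖x‖ * (frob E * ‖x‖) :=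
        mul_le_mul_of_nonneg_left (norm_mulvec_le E x) (norm_nonneg _)
    _ = frob E := by rw [hx]; ring

lemma eigenvalue_eq_ray {A : Matrix (Fin n) (Fin n) ℝ} (hA : A.IsHermitian) (j : Fin n) :
    hA.eigenvalues j = ray A (hA.eigenvectorBasis j) := by
  unfold ray
  rw [Spec.eigen_apply hA j, real_inner_smul_right, real_inner_self_eq_norm_sq,
    hA.eigenvectorBasis.orthonormal.1 j]
  norm_num

lemma norm_eigenvectorBasis {A : Matrix (Fin n) (Fin n) ℝ} (hA : A.IsHermitian) (j : Fin n) :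
    ‖hA.eigenvectorBasis j‖ = 1 := hA.eigenvectorBasis.orthonormal.1 j

lemma abs_sortedEig_le_frob {A : Matrix (Fin n) (Fin n) ℝ} (hA : A.IsHermitian) (i : Fin n) :
    |sortedEig A i| ≤ frob A := by
  rw [sortedEig, dif_pos hA]
  rw [eigenvalue_eq_ray hA]
  exact abs_ray_le_frob A (norm_eigenvectorBasis hA _)

lemma sortedEig_nonneg_of_psd (P : Matrix (Fin n) (Fin n) ℝ)
    (hM : (Pᵀ * P).IsHermitian) (i : Fin n) : 0 ≤ sortedEig (Pᵀ * P) i := by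
  rw [sortedEig, dif_pos hM, eigenvalue_eq_ray hM]
  exact ray_transpose_mul_self P _

variable {n : ℕ}

lemma transpose_eq_conjTranspose (P : Matrix (Fin n) (Fin n) ℝ) : Pᵀ = Pᴴ := by
  ext i j; simp [Matrix.conjTranspose_apply]

lemma isHermitian_tmul (P : Matrix (Fin n) (Fin n) ℝ) : (Pᵀ * P).IsHermitian := by
  rw [transpose_eq_conjTranspose]
  exact Matrix.isHermitian_conjTranspose_mul_self P

lemma isHermitian_msym (Z : Matrix (Fin n) (Fin n) ℝ) : (msym Z).IsHermitian := by
  rw [Matrix.IsHermitian, ← transpose_eq_conjTranspose, msym, Matrix.transpose_smul,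
    Matrix.transpose_add, Matrix.transpose_transpose]
  rw [add_comm]

lemma frob_msym_le (Z : Matrix (Fin n) (Fin n) ℝ) : frob (msym Z) ≤ frob Z := by
  rw [msym]
  calc frob ((1/2 : ℝ) • (Z + Zᵀ)) = (1/2) * frob (Z + Zᵀ) := by
        rw [frob_smul]; norm_num
    _ ≤ (1/2) * (frob Z + frob Zᵀ) := by
        apply mul_le_mul_of_nonneg_left (frob_add _ _); norm_num
    _ = frob Z := by rw [frob_transpose]; ring

set_option maxHeartbeats 2000000 in
theorem stmt8' (n : ℕ) (hn : 1 ≤ n) (r : ℝ) (hr : 0 < r) :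
    ∃ ε₀ > (0 : ℝ), ∃ C > (0 : ℝ), ∀ Z : Matrix (Fin n) (Fin n) ℝ, frob Z ≤ r →
      ∀ ε : ℝ, 0 < ε → ε ≤ ε₀ → ∀ i : Fin n,
        |singVals (mexp (ε • Z)) i - 1 - ε * sortedEig (msym Z) i| ≤ C * ε ^ 2 := by
  set c₁ : ℝ := n * (r^2 * Real.exp r) with hc₁def
  have hc₁ : 0 < c₁ := by
    have : (0:ℝ) < n := by exact_mod_cast hn
    positivity
  set CR : ℝ := 2*c₁ + (r + c₁)^2 with hCRdef
  have hCR : 0 < CR := by positivity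
  set C : ℝ := 2*(CR + r^2) with hCdef
  refine ⟨min 1 (1/(1+2*r+CR)), by positivity, C, by positivity, ?_⟩
  intro Z hZ ε hε hεle i
  have hε1 : ε ≤ 1 := le_trans hεle (min_le_left _ _)
  have hε2 : ε * (1+2*r+CR) ≤ 1 := by
    have h2 := le_trans hεle (min_le_right _ _)
    rw [le_div_iff₀ (by positivity)] at h2
    linarith [h2]
  -- set up matrices
  set S := msym Z with hSdef
  have hS : S.IsHermitian := isHermitian_msym Z
  set X := mexp (ε • Z) with hXdef
  set M := Xᵀ * X with hMdef
  have hM : M.IsHermitian := isHermitian_tmul X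
  set E := mexp (ε • Z) - 1 - ε • Z with hEdef
  have hfrobεZ : frob (ε • Z) ≤ ε * r := by
    rw [frob_smul, abs_of_pos hε]
    exact mul_le_mul_of_nonneg_left hZ (le_of_lt hε)
  have hεr0 : 0 ≤ ε * r := by positivity
  have hE : frob E ≤ c₁ * ε^2 := by
    calc frob E ≤ n * ((ε*r)^2 * Real.exp (ε*r)) := mexp_tail _ hfrobεZ hεr0
      _ ≤ n * ((ε*r)^2 * Real.exp r) := by
          apply mul_le_mul_of_nonneg_left _ (by positivity)
          apply mul_le_mul_of_nonneg_left _ (by positivity)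
          apply Real.exp_le_exp.mpr
          nlinarith
      _ = c₁ * ε^2 := by rw [hc₁def]; ring
  set F := ε • Z + E with hFdef
  have hXF : X = 1 + F := by rw [hFdef, hEdef, hXdef]; abel
  have hF : frob F ≤ ε * (r + c₁) := by
    calc frob F ≤ frob (ε • Z) + frob E := frob_add _ _
      _ ≤ ε * r + c₁ * ε^2 := add_le_add hfrobεZ hE
      _ ≤ ε * r + c₁ * ε := by nlinarith [mul_le_mul_of_nonneg_right hε1 hε.le, hc₁]
      _ = ε * (r + c₁) := by ring
  set R := M - 1 - (2*ε) • S with hRdef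
  have hMR : M = 1 + (2*ε) • S + R := by rw [hRdef]; abel
  have hRform : R = Eᵀ + E + Fᵀ * F := by
    have h2S : (2*ε) • S = ε • Z + ε • Zᵀ := by
      rw [hSdef, msym, smul_smul, show (2*ε)*(1/2 : ℝ) = ε by ring, smul_add]
    have hM' : M = 1 + Fᵀ + F + Fᵀ * F := by
      rw [hMdef, hXF, Matrix.transpose_add, Matrix.transpose_one, add_mul, one_mul, mul_add,
        mul_one]
      abel
    have hFT : Fᵀ = ε • Zᵀ + Eᵀ := by
      rw [hFdef, Matrix.transpose_add, Matrix.transpose_smul]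
    rw [hRdef, hM', h2S, hFT, hFdef]
    abel
  have hR : frob R ≤ CR * ε^2 := by
    calc frob R ≤ frob (Eᵀ + E) + frob (Fᵀ * F) := by rw [hRform]; exact frob_add _ _
      _ ≤ (frob Eᵀ + frob E) + frob Fᵀ * frob F := add_le_add (frob_add _ _) (frob_mul _ _)
      _ ≤ (c₁*ε^2 + c₁*ε^2) + (ε*(r+c₁)) * (ε*(r+c₁)) := by
          apply add_le_add (add_le_add _ hE)
          · apply mul_le_mul (by rw [frob_transpose]; exact hF) hF (frob_nonneg _) (by positivity)
          · rw [frob_transpose]; exact hE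
      _ = CR * ε^2 := by rw [hCRdef]; ring
  -- Rayleigh identity
  have hray : ∀ x : EuclideanSpace ℝ (Fin n), ‖x‖ = 1 →
      ray M x = 1 + (2*ε) * ray S x + ray R x := by
    intro x hx
    conv_lhs => rw [hMR]
    rw [ray_add, ray_add, ray_one x hx, ray_smul]
  set μ := sortedEig S i with hμdef
  have hμ : |μ| ≤ r := le_trans (abs_sortedEig_le_frob hS i) (le_trans (frob_msym_le Z) hZ)
  -- upper bound
  have hub : sortedEig M i ≤ 1 + 2*ε*μ + CR*ε^2 := by
    have h := sorted_le hM hS (1 + CR*ε^2) (2*ε) (by positivity) (fun x hx => by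
      rw [hray x hx]
      have := abs_le.mp (abs_ray_le_frob R hx)
      have h2 := hR
      nlinarith [this.2]) i
    rw [← hμdef] at h
    nlinarith [h]
  have hlb : 1 + 2*ε*μ - CR*ε^2 ≤ sortedEig M i := by
    have h := sorted_le hS hM ((CR*ε^2 - 1)/(2*ε)) (1/(2*ε)) (by positivity) (fun x hx => by
      have hid := hray x hx
      have hRx := abs_le.mp (abs_ray_le_frob R hx)
      rw [show (CR*ε^2 - 1)/(2*ε) + 1/(2*ε) * ray M x = (CR*ε^2 - 1 + ray M x)/(2*ε) by ring]
      rw [le_div_iff₀ (by positivity)]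
      nlinarith [hRx.1, hR]) i
    rw [← hμdef] at h
    rw [show (CR*ε^2 - 1)/(2*ε) + 1/(2*ε) * sortedEig M i
        = (CR*ε^2 - 1 + sortedEig M i)/(2*ε) by ring, le_div_iff₀ (by positivity)] at h
    nlinarith [h]
  -- sqrt step
  have hlam0 : 0 ≤ sortedEig M i := sortedEig_nonneg_of_psd X hM i
  set lam := sortedEig M i with hlamdef
  set c := 1 + ε*μ with hcdef
  have hcge : (1:ℝ)/2 ≤ c := by
    have h1 : ε * |μ| ≤ ε * r := mul_le_mul_of_nonneg_left hμ (le_of_lt hε)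
    have h2 : ε * r ≤ 1/2 := by nlinarith [hε2, hr, hε]
    have h3 : -(ε*|μ|) ≤ ε*μ := by
      have := neg_abs_le μ
      nlinarith [this, hε]
    rw [hcdef]
    linarith
  have hkey : |lam - c^2| ≤ (CR + r^2) * ε^2 := by
    rw [abs_le]
    constructor
    · have hμsq : μ^2 ≤ r^2 := by nlinarith [abs_le.mp hμ]
      have hμ2 : (ε*μ)^2 ≤ r^2 * ε^2 := by
        calc (ε*μ)^2 = ε^2 * μ^2 := by ring
          _ ≤ ε^2 * r^2 := mul_le_mul_of_nonneg_left hμsq (sq_nonneg ε)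
          _ = r^2 * ε^2 := by ring
      rw [hcdef]
      nlinarith [hub]
    · have hμ2 : 0 ≤ (ε*μ)^2 := sq_nonneg _
      rw [hcdef]
      nlinarith [hlb]
  have hsq : Real.sqrt lam ^ 2 = lam := Real.sq_sqrt hlam0
  have hs0 : 0 ≤ Real.sqrt lam := Real.sqrt_nonneg _
  have hfinal : |Real.sqrt lam - c| ≤ C * ε^2 := by
    have hmul : |Real.sqrt lam - c| * (Real.sqrt lam + c) = |lam - c^2| := by
      rw [← abs_of_nonneg (by linarith : (0:ℝ) ≤ Real.sqrt lam + c), ← abs_mul]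
      congr 1
      nlinarith [hsq]
    have hden : (1:ℝ)/2 ≤ Real.sqrt lam + c := by linarith
    have habs : 0 ≤ |Real.sqrt lam - c| := abs_nonneg _
    rw [hCdef]
    nlinarith [hmul, hkey, hden, habs]
  have hgoal : singVals (mexp (ε • Z)) i - 1 - ε * sortedEig (msym Z) i
      = Real.sqrt lam - c := by
    rw [singVals, hcdef, hμdef, hlamdef, hMdef, hXdef, hSdef]
    ring
  rw [hgoal]
  exact hfinal

end Aux

/-- Expansion  `σ_i(e^{εZ}) = 1 + ε λ_i(Z_sym) + O(ε²)`, uniformly on bounded sets. -/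
theorem stmt8 (n : ℕ) (hn : 1 ≤ n) (r : ℝ) (hr : 0 < r) :
    ∃ ε₀ > (0 : ℝ), ∃ C > (0 : ℝ), ∀ Z : Matrix (Fin n) (Fin n) ℝ, frob Z ≤ r →
      ∀ ε : ℝ, 0 < ε → ε ≤ ε₀ → ∀ i : Fin n,
        |singVals (mexp (ε • Z)) i - 1 - ε * sortedEig (msym Z) i| ≤ C * ε ^ 2 := by
  exact Aux.stmt8' n hn r hr
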